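/- For λ' ⪯ λ'' in Λ, the linear map π_{λ',λ''} : A_{⪯λ''} → A_{⪯λ'} sending the orbit-sum basis element e_{(l,c)_{λ''}} to e_{(l,c)_{λ'}} (and to 0 when the orbit doesn't meet the smaller family) is a surjective algebra homomorphism, and its kernel is the ideal spanned by the basis elements mapped to 0. -/
import Mathlib


open scoped Classical

/-- An admissible set of data `(Λ, G, η)` in the sense of Ivanov–Kerov /
Alekseevski–Natanzon: a poset `Λ` with least element and binary suprema, a group
`G` acting on `Λ` by order automorphisms, and a `G`-equivariant monotone family
of finite subgroups `G_λ = η λ` satisfying the admissibility axioms (in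
particular axiom 5: partial elements lying below a common `λ` that are conjugate
in `G` are conjugate in `G_λ`, and its consequence that a `G`-conjugacy class
meets each `G_λ` in at most one `G_λ`-class). -/
structure AdmissibleData (G Λ : Type*) [Group G] [PartialOrder Λ] [OrderBot Λ]
    [MulAction G Λ] where
  wedge : Λ → Λ → Λ
  isLUB_wedge : ∀ a b : Λ, IsLUB {a, b} (wedge a b)
  eta : Λ → Subgroup G
  eta_mono : Monotone eta
  eta_bot : eta ⊥ = ⊥
  smul_le_iff : ∀ (g : G) (a b : Λ), a ≤ b ↔ g • a ≤ g • b
  eta_equivariant : ∀ (g : G) (a : Λ) (x : G), x ∈ eta a ↔ g * x * g⁻¹ ∈ eta (g • a)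
  eta_stabilizes : ∀ (a : Λ) (g : G), g ∈ eta a → g • a = a
  eta_finite : ∀ a : Λ, (eta a : Set G).Finite
  pred_finite : ∀ a : Λ, {b : Λ | b ≤ a}.Finite
  conj_cond : ∀ (lam lam' lam'' : Λ) (h' h'' : G), lam' ≤ lam → lam'' ≤ lam →
    h' ∈ eta lam' → h'' ∈ eta lam'' →
    (∃ g : G, g • lam' = lam'' ∧ g * h' * g⁻¹ = h'') →
    ∃ g ∈ eta lam, g • lam' = lam'' ∧ g * h' * g⁻¹ = h''
  conj_in_sub : ∀ (a : Λ) (x y : G), x ∈ eta a → y ∈ eta a → IsConj x y →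
    ∃ g ∈ eta a, g * x * g⁻¹ = y

variable {G Λ : Type*} [Group G] [PartialOrder Λ] [OrderBot Λ] [MulAction G Λ]

/-- Partial elements: pairs `(λ, h)` with `h ∈ G_λ`. -/
abbrev PartialElt (D : AdmissibleData G Λ) : Type _ := {p : Λ × G // p.2 ∈ D.eta p.1}

/-- Conjugation of partial elements: `g • (λ, h) = (g•λ, g h g⁻¹)`; two partial
elements are equivalent iff they lie in the same `G`-orbit (conjugacy class). -/
def orbSetoid (D : AdmissibleData G Λ) : Setoid (PartialElt D) where
  r p q := ∃ g : G, g • p.val.1 = q.val.1 ∧ g * p.val.2 * g⁻¹ = q.val.2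
  iseqv := by
    constructor
    · intro p; exact ⟨1, by simp, by simp⟩
    · rintro p q ⟨g, h1, h2⟩
      exact ⟨g⁻¹, by rw [← h1, inv_smul_smul], by rw [← h2]; group⟩
    · rintro p q r ⟨g, h1, h2⟩ ⟨g', h1', h2'⟩
      exact ⟨g' * g, by rw [mul_smul, h1, h1'], by rw [← h2', ← h2]; group⟩

/-- Conjugacy classes of partial elements (the index set `Ω` of the basis of the
generalized Ivanov–Kerov algebra). -/
abbrev Orb (D : AdmissibleData G Λ) : Type _ := Quotient (orbSetoid D)

/-- Structure constant of the generalized IK-algebra: the number of pairs of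
partial elements in the classes `ω', ω''` whose product is exactly the given
partial element `(λ, h)`. -/
noncomputable def Pconst (D : AdmissibleData G Λ) (ω' ω'' : Orb D) (lam : Λ) (h : G) : ℕ :=
  Nat.card {pq : PartialElt D × PartialElt D //
    Quotient.mk (orbSetoid D) pq.1 = ω' ∧ Quotient.mk (orbSetoid D) pq.2 = ω'' ∧
    D.wedge pq.1.val.1 pq.2.val.1 = lam ∧ pq.1.val.2 * pq.2.val.2 = h}

/-- `ξ(l', c; l)` computed from representatives: the number of `μ` in the
`G`-orbit of `lam'` with `μ ⪯ lam` and `h ∈ G_μ`. -/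
noncomputable def xiConst (D : AdmissibleData G Λ) (lam' : Λ) (h : G) (lam : Λ) : ℕ :=
  Nat.card {μ : Λ // (∃ g : G, g • lam' = μ) ∧ μ ≤ lam ∧ h ∈ D.eta μ}

/-- Structure constant `S^{c(λ)}_{c'(λ), c''(λ)}` of the center `Z(k[G_λ])`: the
number of factorizations `h = a·b` inside `G_λ` with `a` conjugate (in `G`) to
`x'` and `b` conjugate to `x''`. -/
noncomputable def Sconst (D : AdmissibleData G Λ) (x' x'' : G) (lam : Λ) (h : G) : ℕ :=
  Nat.card {ab : G × G // ab.1 ∈ D.eta lam ∧ ab.2 ∈ D.eta lam ∧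
    IsConj x' ab.1 ∧ IsConj x'' ab.2 ∧ ab.1 * ab.2 = h}

/-- Partial elements of the truncated family `Λ_{⪯λ}`: pairs `(μ, h)` with
`μ ⪯ λ` and `h ∈ G_μ`. -/
abbrev PartialEltLe (D : AdmissibleData G Λ) (lam : Λ) : Type _ :=
  {p : Λ × G // p.1 ≤ lam ∧ p.2 ∈ D.eta p.1}

/-- Conjugacy of partial elements of `Λ_{⪯λ}` under the subgroup `G_λ`. -/
def orbSetoidLe (D : AdmissibleData G Λ) (lam : Λ) : Setoid (PartialEltLe D lam) where
  r p q := ∃ g ∈ D.eta lam, g • p.val.1 = q.val.1 ∧ g * p.val.2 * g⁻¹ = q.val.2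
  iseqv := by
    constructor
    · intro p; exact ⟨1, one_mem _, by simp, by simp⟩
    · rintro p q ⟨g, hg, h1, h2⟩
      exact ⟨g⁻¹, inv_mem hg, by rw [← h1, inv_smul_smul], by rw [← h2]; group⟩
    · rintro p q r ⟨g, hg, h1, h2⟩ ⟨g', hg', h1', h2'⟩
      exact ⟨g' * g, mul_mem hg' hg, by rw [mul_smul, h1, h1'],
        by rw [← h2', ← h2]; group⟩

/-- Conjugacy classes of partial elements of the truncated family: the basis
index set of the finite-dimensional algebra `A_{⪯λ}`. -/
abbrev OrbLe (D : AdmissibleData G Λ) (lam : Λ) : Type _ := Quotient (orbSetoidLe D lam)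

/-- Structure constants of the truncated algebra `A_{⪯λ}`. -/
noncomputable def PconstLe (D : AdmissibleData G Λ) (lam : Λ)
    (ω' ω'' : OrbLe D lam) (μ : Λ) (h : G) : ℕ :=
  Nat.card {pq : PartialEltLe D lam × PartialEltLe D lam //
    Quotient.mk (orbSetoidLe D lam) pq.1 = ω' ∧
    Quotient.mk (orbSetoidLe D lam) pq.2 = ω'' ∧
    D.wedge pq.1.val.1 pq.2.val.1 = μ ∧ pq.1.val.2 * pq.2.val.2 = h}

/-- The multiplication of the truncated algebra `A_{⪯λ}` on coordinates with
respect to the basis of conjugacy-class sums, given by the structure constants. -/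
noncomputable def mulLe (k : Type*) [Field k] (D : AdmissibleData G Λ) (lam : Λ)
    (a b : OrbLe D lam → k) : OrbLe D lam → k :=
  fun ω => ∑ᶠ ω' : OrbLe D lam, ∑ᶠ ω'' : OrbLe D lam,
    a ω' * b ω'' *
      (PconstLe D lam ω' ω'' (Quotient.out ω).val.1 (Quotient.out ω).val.2 : k)

/-- For `λ' ⪯ λ''`, every `G_{λ'}`-class of partial elements below `λ'` is
contained in a unique `G_{λ''}`-class of partial elements below `λ''`. -/
def restrictOrb (D : AdmissibleData G Λ) {lam' lam'' : Λ} (hle : lam' ≤ lam'') :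
    OrbLe D lam' → OrbLe D lam'' :=
  Quotient.lift
    (fun p => Quotient.mk (orbSetoidLe D lam'')
      ⟨p.val, le_trans p.prop.1 hle, p.prop.2⟩)
    (by rintro p q ⟨g, hg, h1, h2⟩
        exact Quotient.sound ⟨g, D.eta_mono hle hg, h1, h2⟩)

section Aux

variable (D : AdmissibleData G Λ)

lemma wedge_smul (g : G) (a b : Λ) :
    D.wedge (g • a) (g • b) = g • D.wedge a b := by
  refine (D.isLUB_wedge (g • a) (g • b)).unique ?_
  constructor
  · rintro x (rfl | rfl)
    · exact (D.smul_le_iff g a _).mp ((D.isLUB_wedge a b).1 (Set.mem_insert _ _))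
    · exact (D.smul_le_iff g b _).mp
        ((D.isLUB_wedge a b).1 (Set.mem_insert_of_mem _ rfl))
  · intro x hx
    have ha : a ≤ g⁻¹ • x := by
      have h1 : g • a ≤ x := hx (Set.mem_insert _ _)
      have := (D.smul_le_iff g⁻¹ (g • a) x).mp h1
      rwa [inv_smul_smul] at this
    have hb : b ≤ g⁻¹ • x := by
      have h1 : g • b ≤ x := hx (Set.mem_insert_of_mem _ rfl)
      have := (D.smul_le_iff g⁻¹ (g • b) x).mp h1
      rwa [inv_smul_smul] at this
    have hw : D.wedge a b ≤ g⁻¹ • x := by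
      refine (D.isLUB_wedge a b).2 ?_
      rintro y (rfl | rfl) <;> assumption
    have := (D.smul_le_iff g (D.wedge a b) (g⁻¹ • x)).mp hw
    rwa [smul_inv_smul] at this

lemma le_wedge_left (a b : Λ) : a ≤ D.wedge a b :=
  (D.isLUB_wedge a b).1 (Set.mem_insert _ _)

lemma le_wedge_right (a b : Λ) : b ≤ D.wedge a b :=
  (D.isLUB_wedge a b).1 (Set.mem_insert_of_mem _ rfl)

instance finite_partialEltLe (lam : Λ) : Finite (PartialEltLe D lam) := by
  haveI := (D.pred_finite lam).to_subtype
  haveI := (D.eta_finite lam).to_subtype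
  refine Finite.of_injective
    (fun p : PartialEltLe D lam =>
      ((⟨p.val.1, p.prop.1⟩ : {b : Λ | b ≤ lam}),
        (⟨p.val.2, D.eta_mono p.prop.1 p.prop.2⟩ : (D.eta lam : Set G)))) ?_
  rintro ⟨⟨a1, a2⟩, _⟩ ⟨⟨b1, b2⟩, _⟩ h
  simp only [Prod.mk.injEq, Subtype.mk.injEq] at h
  exact Subtype.ext (Prod.ext h.1 h.2)

instance finite_orbLe (lam : Λ) : Finite (OrbLe D lam) :=
  Quotient.finite _

lemma restrictOrb_mk {lam' lam'' : Λ} (hle : lam' ≤ lam'')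
    (p : PartialEltLe D lam') :
    restrictOrb D hle (Quotient.mk (orbSetoidLe D lam') p) =
      Quotient.mk (orbSetoidLe D lam'')
        ⟨p.val, le_trans p.prop.1 hle, p.prop.2⟩ := rfl

lemma restrictOrb_injective {lam' lam'' : Λ} (hle : lam' ≤ lam'') :
    Function.Injective (restrictOrb D hle) := by
  intro ω₁ ω₂ h
  induction ω₁ using Quotient.ind with | _ p =>
  induction ω₂ using Quotient.ind with | _ q =>
  obtain ⟨g, _hg, h1, h2⟩ := Quotient.exact h
  obtain ⟨g', hg', h1', h2'⟩ := D.conj_cond lam' p.val.1 q.val.1 p.val.2 q.val.2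
    p.prop.1 q.prop.1 p.prop.2 q.prop.2 ⟨g, h1, h2⟩
  exact Quotient.sound ⟨g', hg', h1', h2'⟩

/-- Conjugation of partial elements of `Λ_{⪯λ}` by an element of `G_λ`. -/
def conjPE (lam : Λ) (g : G) (hg : g ∈ D.eta lam) (p : PartialEltLe D lam) :
    PartialEltLe D lam :=
  ⟨(g • p.val.1, g * p.val.2 * g⁻¹), by
    constructor
    · have := (D.smul_le_iff g p.val.1 lam).mp p.prop.1
      rwa [D.eta_stabilizes lam g hg] at this
    · exact (D.eta_equivariant g p.val.1 p.val.2).mp p.prop.2⟩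

lemma conjPE_conjPE (lam : Λ) (g g' : G) (hg : g ∈ D.eta lam)
    (hg' : g' ∈ D.eta lam) (p : PartialEltLe D lam) :
    conjPE D lam g hg (conjPE D lam g' hg' p) =
      conjPE D lam (g * g') (mul_mem hg hg') p := by
  refine Subtype.ext (Prod.ext ?_ ?_)
  · simp [conjPE, mul_smul]
  · simp only [conjPE]; group

lemma conjPE_one (lam : Λ) (p : PartialEltLe D lam) :
    conjPE D lam 1 (one_mem _) p = p := by
  refine Subtype.ext (Prod.ext ?_ ?_) <;> simp [conjPE]

lemma mk_conjPE (lam : Λ) (g : G) (hg : g ∈ D.eta lam)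
    (p : PartialEltLe D lam) :
    Quotient.mk (orbSetoidLe D lam) (conjPE D lam g hg p) =
      Quotient.mk (orbSetoidLe D lam) p := by
  refine Eq.symm (Quotient.sound ?_)
  exact ⟨g, hg, rfl, rfl⟩

/-- Structure constants are invariant under conjugating the target partial
element by `G_λ`. -/
lemma PconstLe_conj (lam : Λ) (ω' ω'' : OrbLe D lam) (μ : Λ) (h : G)
    (g : G) (hg : g ∈ D.eta lam) :
    PconstLe D lam ω' ω'' (g • μ) (g * h * g⁻¹) = PconstLe D lam ω' ω'' μ h := by
  refine (Nat.card_eq_of_bijective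
    (fun x => ⟨(conjPE D lam g hg x.val.1, conjPE D lam g hg x.val.2),
      by rw [mk_conjPE]; exact x.prop.1,
      by rw [mk_conjPE]; exact x.prop.2.1,
      by show D.wedge (g • x.val.1.val.1) (g • x.val.2.val.1) = g • μ
         rw [wedge_smul, x.prop.2.2.1],
      by calc g * x.val.1.val.2 * g⁻¹ * (g * x.val.2.val.2 * g⁻¹)
              = g * (x.val.1.val.2 * x.val.2.val.2) * g⁻¹ := by group
            _ = g * h * g⁻¹ := by rw [x.prop.2.2.2]⟩
      : _ → {pq : PartialEltLe D lam × PartialEltLe D lam //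
        Quotient.mk (orbSetoidLe D lam) pq.1 = ω' ∧
        Quotient.mk (orbSetoidLe D lam) pq.2 = ω'' ∧
        D.wedge pq.1.val.1 pq.2.val.1 = g • μ ∧
        pq.1.val.2 * pq.2.val.2 = g * h * g⁻¹})
    ⟨?_, ?_⟩).symm
  · intro x y hxy
    have h1 := congrArg (fun z => (z : _ × _).1.val) (congrArg Subtype.val hxy)
    have h2 := congrArg (fun z => (z : _ × _).2.val) (congrArg Subtype.val hxy)
    simp only [conjPE, Prod.mk.injEq] at h1 h2
    refine Subtype.ext (Prod.ext (Subtype.ext (Prod.ext ?_ ?_)) (Subtype.ext (Prod.ext ?_ ?_)))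
    · exact smul_left_cancel g h1.1
    · exact mul_left_cancel (mul_right_cancel h1.2)
    · exact smul_left_cancel g h2.1
    · exact mul_left_cancel (mul_right_cancel h2.2)
  · rintro ⟨⟨p, q⟩, h1, h2, h3, h4⟩
    refine ⟨⟨(conjPE D lam g⁻¹ (inv_mem hg) p, conjPE D lam g⁻¹ (inv_mem hg) q),
      ?_, ?_, ?_, ?_⟩, ?_⟩
    · rw [mk_conjPE]; exact h1
    · rw [mk_conjPE]; exact h2
    · show D.wedge (g⁻¹ • p.val.1) (g⁻¹ • q.val.1) = μ
      rw [wedge_smul, h3, inv_smul_smul]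
    · show g⁻¹ * p.val.2 * g⁻¹⁻¹ * (g⁻¹ * q.val.2 * g⁻¹⁻¹) = h
      have : p.val.2 * q.val.2 = g * h * g⁻¹ := h4
      calc g⁻¹ * p.val.2 * g⁻¹⁻¹ * (g⁻¹ * q.val.2 * g⁻¹⁻¹)
          = g⁻¹ * (p.val.2 * q.val.2) * g := by group
        _ = h := by rw [this]; group
    · refine Subtype.ext (Prod.ext ?_ ?_) <;>
        simp [conjPE_conjPE, conjPE_one]

/-- Vanishing: if one of the classes does not meet `Λ_{⪯λ'}`, the structure
constant at a partial element below `λ'` is zero. -/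
lemma PconstLe_eq_zero {lam' lam'' : Λ} (hle : lam' ≤ lam'')
    (σ' σ'' : OrbLe D lam'') (μ : Λ) (h : G) (hμ : μ ≤ lam')
    (hσ : σ' ∉ Set.range (restrictOrb D hle) ∨
      σ'' ∉ Set.range (restrictOrb D hle)) :
    PconstLe D lam'' σ' σ'' μ h = 0 := by
  haveI : IsEmpty {pq : PartialEltLe D lam'' × PartialEltLe D lam'' //
      Quotient.mk (orbSetoidLe D lam'') pq.1 = σ' ∧
      Quotient.mk (orbSetoidLe D lam'') pq.2 = σ'' ∧
      D.wedge pq.1.val.1 pq.2.val.1 = μ ∧ pq.1.val.2 * pq.2.val.2 = h} := by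
    constructor
    rintro ⟨⟨p, q⟩, h1, h2, h3, h4⟩
    have hp1 : p.val.1 ≤ lam' := le_trans (h3 ▸ le_wedge_left D p.val.1 q.val.1) hμ
    have hq1 : q.val.1 ≤ lam' := le_trans (h3 ▸ le_wedge_right D p.val.1 q.val.1) hμ
    rcases hσ with hσ | hσ
    · exact hσ ⟨Quotient.mk (orbSetoidLe D lam') ⟨p.val, hp1, p.prop.2⟩,
        (restrictOrb_mk D hle _).trans
          ((congrArg (Quotient.mk (orbSetoidLe D lam'')) (Subtype.ext rfl)).trans h1)⟩
    · exact hσ ⟨Quotient.mk (orbSetoidLe D lam') ⟨q.val, hq1, q.prop.2⟩,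
        (restrictOrb_mk D hle _).trans
          ((congrArg (Quotient.mk (orbSetoidLe D lam'')) (Subtype.ext rfl)).trans h2)⟩
  exact Nat.card_of_isEmpty

/-- Agreement of structure constants of `A_{⪯λ''}` and `A_{⪯λ'}` on classes
meeting the smaller family, at a partial element below `λ'`. -/
lemma PconstLe_restrict {lam' lam'' : Λ} (hle : lam' ≤ lam'')
    (ω' ω'' : OrbLe D lam') (μ : Λ) (h : G) (hμ : μ ≤ lam') :
    PconstLe D lam'' (restrictOrb D hle ω') (restrictOrb D hle ω'') μ h =
      PconstLe D lam' ω' ω'' μ h := by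
  refine (Nat.card_eq_of_bijective
    (fun x => ⟨((⟨x.val.1.val, le_trans x.val.1.prop.1 hle, x.val.1.prop.2⟩ :
        PartialEltLe D lam''),
      (⟨x.val.2.val, le_trans x.val.2.prop.1 hle, x.val.2.prop.2⟩ :
        PartialEltLe D lam'')),
      (restrictOrb_mk D hle x.val.1).symm.trans
        (congrArg (restrictOrb D hle) x.prop.1),
      (restrictOrb_mk D hle x.val.2).symm.trans
        (congrArg (restrictOrb D hle) x.prop.2.1),
      x.prop.2.2.1, x.prop.2.2.2⟩
      : _ → {pq : PartialEltLe D lam'' × PartialEltLe D lam'' //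
        Quotient.mk (orbSetoidLe D lam'') pq.1 = restrictOrb D hle ω' ∧
        Quotient.mk (orbSetoidLe D lam'') pq.2 = restrictOrb D hle ω'' ∧
        D.wedge pq.1.val.1 pq.2.val.1 = μ ∧ pq.1.val.2 * pq.2.val.2 = h})
    ⟨?_, ?_⟩).symm
  · intro x y hxy
    have h1 := congrArg (fun z => (z : _ × _).1.val) (congrArg Subtype.val hxy)
    have h2 := congrArg (fun z => (z : _ × _).2.val) (congrArg Subtype.val hxy)
    simp only at h1 h2
    exact Subtype.ext (Prod.ext (Subtype.ext h1) (Subtype.ext h2))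
  · rintro ⟨⟨p, q⟩, h1, h2, h3, h4⟩
    have hp1 : p.val.1 ≤ lam' := le_trans (h3 ▸ le_wedge_left D p.val.1 q.val.1) hμ
    have hq1 : q.val.1 ≤ lam' := le_trans (h3 ▸ le_wedge_right D p.val.1 q.val.1) hμ
    have hpc : restrictOrb D hle
        (Quotient.mk (orbSetoidLe D lam') ⟨p.val, hp1, p.prop.2⟩) =
        restrictOrb D hle ω' :=
      (restrictOrb_mk D hle _).trans
        ((congrArg (Quotient.mk (orbSetoidLe D lam'')) (Subtype.ext rfl)).trans h1)
    have hqc : restrictOrb D hle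
        (Quotient.mk (orbSetoidLe D lam') ⟨q.val, hq1, q.prop.2⟩) =
        restrictOrb D hle ω'' :=
      (restrictOrb_mk D hle _).trans
        ((congrArg (Quotient.mk (orbSetoidLe D lam'')) (Subtype.ext rfl)).trans h2)
    refine ⟨⟨(⟨p.val, hp1, p.prop.2⟩, ⟨q.val, hq1, q.prop.2⟩),
      restrictOrb_injective D hle hpc, restrictOrb_injective D hle hqc, h3, h4⟩, ?_⟩
    exact Subtype.ext (Prod.ext (Subtype.ext rfl) (Subtype.ext rfl))

lemma sum_range_eq {α β M : Type*} [Fintype α] [Fintype β] [AddCommMonoid M]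
    (r : α → β) (hr : Function.Injective r) (f : β → M)
    (hf : ∀ σ, σ ∉ Set.range r → f σ = 0) :
    ∑ σ, f σ = ∑ ω, f (r ω) := by
  classical
  have h1 : ∑ σ ∈ Finset.univ.image r, f σ = ∑ ω, f (r ω) :=
    Finset.sum_image (fun x _ y _ hxy => hr hxy)
  rw [← h1]
  refine (Finset.sum_subset (Finset.subset_univ _) ?_).symm
  intro σ _ hσ
  refine hf σ ?_
  rintro ⟨ω, rfl⟩
  exact hσ (Finset.mem_image_of_mem r (Finset.mem_univ ω))

end Aux

/-- For `λ' ⪯ λ''`, the linear map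
`π_{λ',λ''} : A_{⪯λ''} → A_{⪯λ'}` sending the orbit-sum basis element
`e_{(l,c)_{λ''}}` to `e_{(l,c)_{λ'}}` (and to `0` when the class does not meet
the smaller family) — realized on coordinates as precomposition with
`restrictOrb` — is a surjective algebra homomorphism, and its kernel is the
(span of the) set of basis elements mapped to `0`. -/
theorem stmt15 (k : Type*) [Field k] (D : AdmissibleData G Λ)
    (lam' lam'' : Λ) (hle : lam' ≤ lam'') :
    -- surjectivity
    Function.Surjective
      (fun a : OrbLe D lam'' → k => a ∘ restrictOrb D hle) ∧
    -- linearity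
    (∀ a b : OrbLe D lam'' → k,
      (a + b) ∘ restrictOrb D hle = a ∘ restrictOrb D hle + b ∘ restrictOrb D hle) ∧
    (∀ (c : k) (a : OrbLe D lam'' → k),
      (c • a) ∘ restrictOrb D hle = c • (a ∘ restrictOrb D hle)) ∧
    -- multiplicativity (homomorphism of algebras)
    (∀ a b : OrbLe D lam'' → k,
      mulLe k D lam'' a b ∘ restrictOrb D hle =
        mulLe k D lam' (a ∘ restrictOrb D hle) (b ∘ restrictOrb D hle)) ∧
    -- the kernel is spanned by the basis elements mapped to zero
    {a : OrbLe D lam'' → k | a ∘ restrictOrb D hle = 0} =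
      ↑(Submodule.span k
        ((fun ω => Pi.single ω (1 : k)) ''
          {ω : OrbLe D lam'' | ω ∉ Set.range (restrictOrb D hle)})) := by
  classical
  haveI : Fintype (OrbLe D lam') := Fintype.ofFinite _
  haveI : Fintype (OrbLe D lam'') := Fintype.ofFinite _
  have hinj := restrictOrb_injective D hle
  refine ⟨?_, ?_, ?_, ?_, ?_⟩
  · -- surjectivity
    intro b
    refine ⟨fun σ => if h : ∃ ω, restrictOrb D hle ω = σ then b h.choose else 0, ?_⟩
    funext ω
    have hex : ∃ ω', restrictOrb D hle ω' = restrictOrb D hle ω := ⟨ω, rfl⟩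
    simp only [Function.comp_apply]
    rw [dif_pos hex]
    exact congrArg b (hinj hex.choose_spec)
  · intro a b; rfl
  · intro c a; rfl
  · -- multiplicativity
    intro a b
    funext ω
    simp only [Function.comp_apply, mulLe, finsum_eq_sum_of_fintype]
    obtain ⟨g, hg, e1, e2⟩ := Quotient.exact (show
      Quotient.mk (orbSetoidLe D lam'')
        ⟨(Quotient.out ω).val, le_trans (Quotient.out ω).prop.1 hle,
          (Quotient.out ω).prop.2⟩
        = Quotient.mk (orbSetoidLe D lam'')
            (Quotient.out (restrictOrb D hle ω)) from by
      rw [Quotient.out_eq]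
      conv_rhs => rw [← Quotient.out_eq ω]
      exact (restrictOrb_mk D hle _).symm)
    have hP : ∀ σ' σ'' : OrbLe D lam'', PconstLe D lam'' σ' σ''
        (Quotient.out (restrictOrb D hle ω)).val.1
        (Quotient.out (restrictOrb D hle ω)).val.2 =
        PconstLe D lam'' σ' σ'' (Quotient.out ω).val.1 (Quotient.out ω).val.2 := by
      intro σ' σ''
      rw [← e1, ← e2]
      exact PconstLe_conj D lam'' σ' σ'' _ _ g hg
    simp only [hP]
    have v1 : ∀ σ', σ' ∉ Set.range (restrictOrb D hle) →
        (∑ σ'' : OrbLe D lam'', a σ' * b σ'' *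
          (PconstLe D lam'' σ' σ'' (Quotient.out ω).val.1
            (Quotient.out ω).val.2 : k)) = 0 := by
      intro σ' hσ'
      refine Finset.sum_eq_zero fun σ'' _ => ?_
      rw [PconstLe_eq_zero D hle σ' σ'' _ _ (Quotient.out ω).prop.1 (Or.inl hσ')]
      simp
    rw [sum_range_eq _ hinj _ v1]
    refine Finset.sum_congr rfl fun ω' _ => ?_
    have v2 : ∀ σ'', σ'' ∉ Set.range (restrictOrb D hle) →
        a (restrictOrb D hle ω') * b σ'' *
          (PconstLe D lam'' (restrictOrb D hle ω') σ'' (Quotient.out ω).val.1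
            (Quotient.out ω).val.2 : k) = 0 := by
      intro σ'' hσ''
      rw [PconstLe_eq_zero D hle _ σ'' _ _ (Quotient.out ω).prop.1 (Or.inr hσ'')]
      simp
    rw [sum_range_eq _ hinj _ v2]
    refine Finset.sum_congr rfl fun ω'' _ => ?_
    rw [PconstLe_restrict D hle ω' ω'' _ _ (Quotient.out ω).prop.1]
  · -- kernel
    ext a
    simp only [Set.mem_setOf_eq, SetLike.mem_coe]
    constructor
    · intro h0
      have ha : a = ∑ σ : OrbLe D lam'', Pi.single σ (a σ) :=
        (Finset.univ_sum_single a).symm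
      rw [ha]
      refine Submodule.sum_mem _ fun σ _ => ?_
      by_cases hσ : σ ∈ Set.range (restrictOrb D hle)
      · obtain ⟨ω, rfl⟩ := hσ
        have : a (restrictOrb D hle ω) = 0 := congrFun h0 ω
        rw [this, Pi.single_zero]
        exact zero_mem _
      · have h1 : Pi.single σ (a σ) =
            a σ • (Pi.single σ (1 : k) : OrbLe D lam'' → k) := by
          rw [← Pi.single_smul, smul_eq_mul, mul_one]
        rw [h1]
        exact Submodule.smul_mem _ _ (Submodule.subset_span ⟨σ, hσ, rfl⟩)
    · intro hmem
      have hspan : Submodule.span k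
          ((fun ω => Pi.single ω (1 : k)) ''
            {ω : OrbLe D lam'' | ω ∉ Set.range (restrictOrb D hle)}) ≤
          LinearMap.ker (LinearMap.funLeft k k (restrictOrb D hle)) := by
        rw [Submodule.span_le]
        rintro x ⟨σ, hσ, rfl⟩
        rw [SetLike.mem_coe, LinearMap.mem_ker]
        funext ω'
        show (Pi.single σ (1 : k) : OrbLe D lam'' → k) (restrictOrb D hle ω') = 0
        exact Pi.single_eq_of_ne (fun hc => hσ ⟨ω', hc⟩) 1
      exact LinearMap.mem_ker.mp (hspan hmem)
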